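/- Under the hypotheses of the previous statement and for any convex C¹ entropy η with entropy flux q (q' = η' f'), with q_ec(u⁻,u⁺) = ∫₀¹ q(u(θv⁺+(1−θ)v⁻)) dθ and η̄(u⁻,u⁺) = ∫₀¹ η(u(θv⁺+(1−θ)v⁻)) dθ, one has η(U(u⁻,u⁺)) ≤ (η(u⁻) + η̄(u⁻,u⁺))/2 − (q_ec(u⁻,u⁺) − q(u⁻))/(2α). -/

import Mathlib

open Set MeasureTheory intervalIntegral


lemma hll_aux (f η q : ℝ → ℝ) (m M Lf α um : ℝ)
    (hf : ContDiff ℝ 1 f) (hf' : ∀ w ∈ Set.Icc m M, |deriv f w| ≤ Lf)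
    (hη : ContDiff ℝ 1 η) (hηcvx : ConvexOn ℝ Set.univ η)
    (hq : ∀ u, q u = ∫ w in m..u, deriv η w * deriv f w)
    (hum : um ∈ Set.Icc m M) (hLf : 0 < Lf) (hα : Lf ≤ α) :
    ∀ a ∈ Set.Icc m M,
      η ((a + um) / 2 - (f a - f um) / (2 * α)) ≤
        (η a + η um) / 2 - (q a - q um) / (2 * α) := by
  have hα0 : 0 < α := hLf.trans_le hα
  have h2α : (0:ℝ) < 2 * α := by positivity
  have hfd : Differentiable ℝ f := hf.differentiable one_ne_zero
  have hηd : Differentiable ℝ η := hη.differentiable one_ne_zero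
  have hf'c : Continuous (deriv f) := hf.continuous_deriv le_rfl
  have hη'c : Continuous (deriv η) := hη.continuous_deriv le_rfl
  have hqd : ∀ x, HasDerivAt q (deriv η x * deriv f x) x := by
    intro x
    have h2 : q = fun u => ∫ w in m..u, deriv η w * deriv f w := funext hq
    rw [h2]
    exact ((hη'c.mul hf'c).integral_hasStrictDerivAt m x).hasDerivAt
  set w : ℝ → ℝ := fun a => (a + um) / 2 - (f a - f um) / (2 * α) with hw
  set G : ℝ → ℝ := fun a => (η a + η um) / 2 - (q a - q um) / (2 * α) - η (w a) with hG
  have hwd : ∀ a, HasDerivAt w (1 / 2 - deriv f a / (2 * α)) a := by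
    intro a
    have h1 : HasDerivAt (fun a : ℝ => (a + um) / 2) (1 / 2) a := by
      simpa using ((hasDerivAt_id a).add_const um).div_const 2
    have h2 : HasDerivAt (fun a => (f a - f um) / (2 * α)) (deriv f a / (2 * α)) a :=
      (((hfd a).hasDerivAt).sub_const (f um)).div_const (2 * α)
    exact h1.sub h2
  have hGd : ∀ a, HasDerivAt G
      ((1 / 2 - deriv f a / (2 * α)) * (deriv η a - deriv η (w a))) a := by
    intro a
    have h1 : HasDerivAt (fun a => (η a + η um) / 2) (deriv η a / 2) a :=
      (((hηd a).hasDerivAt).add_const (η um)).div_const 2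
    have h2 : HasDerivAt (fun a => (q a - q um) / (2 * α))
        ((deriv η a * deriv f a) / (2 * α)) a := ((hqd a).sub_const (q um)).div_const (2 * α)
    have h3 : HasDerivAt (fun a => η (w a))
        (deriv η (w a) * (1 / 2 - deriv f a / (2 * α))) a :=
      ((hηd (w a)).hasDerivAt).comp a (hwd a)
    have := (h1.sub h2).sub h3
    exact this.congr_deriv (by ring)
  have hmono : Monotone (deriv η) :=
    monotoneOn_univ.1 (hηcvx.monotoneOn_deriv fun x _ => hηd x)
  have hlip : ∀ x ∈ Icc m M, |f x - f um| ≤ α * |x - um| := by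
    intro x hx
    have := (convex_Icc m M).norm_image_sub_le_of_norm_deriv_le
      (fun y _ => hfd y) (fun y hy => by
        simpa [Real.norm_eq_abs] using (hf' y hy).trans hα) hum hx
    simpa [Real.norm_eq_abs] using this
  have hkey : ∀ a ∈ Icc m M, |(f a - f um) / (2 * α)| ≤ |a - um| / 2 := by
    intro a ha
    rw [abs_div, abs_of_pos h2α, div_le_div_iff₀ h2α (by norm_num)]
    nlinarith [hlip a ha, abs_nonneg (a - um)]
  have hfactor : ∀ a ∈ Icc m M, 0 ≤ 1 / 2 - deriv f a / (2 * α) := by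
    intro a ha
    have h1 : deriv f a ≤ α := (le_abs_self _).trans ((hf' a ha).trans hα)
    rw [sub_nonneg, div_le_div_iff₀ h2α (by norm_num)]
    linarith
  have hwum : w um = um := by simp [hw]
  have hGum : G um = 0 := by simp [hG, hwum]
  have hGdiff : Differentiable ℝ G := fun a => (hGd a).differentiableAt
  have hGcont : Continuous G := hGdiff.continuous
  have hwle : ∀ a ∈ Icc m M, um ≤ a → um ≤ w a ∧ w a ≤ a := by
    intro a ha hua
    have h := abs_le.1 (hkey a ha)
    rw [abs_of_nonneg (sub_nonneg.2 hua)] at h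
    constructor
    · show um ≤ (a + um) / 2 - (f a - f um) / (2 * α); linarith [h.1, h.2]
    · show (a + um) / 2 - (f a - f um) / (2 * α) ≤ a; linarith [h.1, h.2]
  have hwge : ∀ a ∈ Icc m M, a ≤ um → a ≤ w a ∧ w a ≤ um := by
    intro a ha hua
    have h := abs_le.1 (hkey a ha)
    rw [abs_of_nonpos (sub_nonpos.2 hua)] at h
    constructor
    · show a ≤ (a + um) / 2 - (f a - f um) / (2 * α); linarith [h.1, h.2]
    · show (a + um) / 2 - (f a - f um) / (2 * α) ≤ um; linarith [h.1, h.2]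
  intro a ha
  have hGnn : 0 ≤ G a := by
    rcases le_total um a with hua | hua
    · have hmonoG : MonotoneOn G (Icc um M) := by
        apply monotoneOn_of_deriv_nonneg (convex_Icc um M) hGcont.continuousOn
          (fun x _ => ((hGd x).differentiableAt).differentiableWithinAt)
        intro x hx
        rw [interior_Icc] at hx
        have hxm : x ∈ Icc m M := ⟨hum.1.trans hx.1.le, hx.2.le⟩
        rw [(hGd x).deriv]
        apply mul_nonneg (hfactor x hxm)
        exact sub_nonneg.2 (hmono ((hwle x hxm hx.1.le).2))
      have := hmonoG ⟨le_rfl, hum.2⟩ ⟨hua, ha.2⟩ hua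
      rwa [hGum] at this
    · have hantiG : AntitoneOn G (Icc m um) := by
        apply antitoneOn_of_deriv_nonpos (convex_Icc m um) hGcont.continuousOn
          (fun x _ => ((hGd x).differentiableAt).differentiableWithinAt)
        intro x hx
        rw [interior_Icc] at hx
        have hxm : x ∈ Icc m M := ⟨hx.1.le, hx.2.le.trans hum.2⟩
        rw [(hGd x).deriv]
        apply mul_nonpos_of_nonneg_of_nonpos (hfactor x hxm)
        exact sub_nonpos.2 (hmono ((hwge x hxm hx.2.le).1))
      have := hantiG ⟨ha.1, hua⟩ ⟨hum.1, le_rfl⟩ hua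
      rwa [hGum] at this
  have : η (w a) ≤ (η a + η um) / 2 - (q a - q um) / (2 * α) := by
    have := hGnn
    rw [hG] at this
    dsimp at this
    linarith
  exact this


lemma jensen_unit (η g : ℝ → ℝ) (hη : Continuous η) (hcvx : ConvexOn ℝ Set.univ η)
    (hg : Continuous g) :
    η (∫ θ in (0:ℝ)..1, g θ) ≤ ∫ θ in (0:ℝ)..1, η (g θ) := by
  set μ : Measure ℝ := volume.restrict (Ioc (0:ℝ) 1) with hμ
  haveI : IsProbabilityMeasure μ := by
    constructor
    rw [hμ, Measure.restrict_apply_univ, Real.volume_Ioc]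
    norm_num
  have hgi : Integrable g μ := by
    rw [hμ]
    exact hg.integrableOn_Ioc
  have hηgi : Integrable (η ∘ g) μ := by
    rw [hμ]
    exact (hη.comp hg).integrableOn_Ioc
  have := hcvx.map_average_le hη.continuousOn isClosed_univ
    (Filter.Eventually.of_forall fun x => mem_univ (g x)) hgi hηgi
  rw [average_eq_integral, average_eq_integral] at this
  rw [intervalIntegral.integral_of_le zero_le_one, intervalIntegral.integral_of_le zero_le_one]
  exact this


lemma main_ne (f η q : ℝ → ℝ) (m M α um up : ℝ) (u : ℝ → ℝ)
    (hu_cont : Continuous u) (hu_mem : ∀ θ ∈ Icc (0:ℝ) 1, u θ ∈ Icc m M)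
    (hfc : Continuous f) (hηc : Continuous η) (hqc : Continuous q)
    (hll : ∀ a ∈ Icc m M, η ((a + um) / 2 - (f a - f um) / (2 * α)) ≤
        (η a + η um) / 2 - (q a - q um) / (2 * α))
    (hηcvx : ConvexOn ℝ Set.univ η) (hα0 : 0 < α) (hne : um ≠ up) :
    η ((1 - 1 / 2 * ∫ θ in (0:ℝ)..1, (u θ - um) / (up - um)) * um
        + (1 / 2 * ∫ θ in (0:ℝ)..1, (u θ - um) / (up - um)) * up
        - ((∫ θ in (0:ℝ)..1, f (u θ)) - f um) / (2 * α)) ≤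
      (η um + ∫ θ in (0:ℝ)..1, η (u θ)) / 2
        - ((∫ θ in (0:ℝ)..1, q (u θ)) - q um) / (2 * α) := by
  have hupm : up - um ≠ 0 := sub_ne_zero.2 (Ne.symm hne)
  have h2α : (2 * α) ≠ 0 := by positivity
  have hIu : IntervalIntegrable u volume 0 1 := hu_cont.intervalIntegrable 0 1
  have hIf : IntervalIntegrable (fun θ => f (u θ)) volume 0 1 :=
    (hfc.comp hu_cont).intervalIntegrable 0 1
  have hIη : IntervalIntegrable (fun θ => η (u θ)) volume 0 1 :=
    (hηc.comp hu_cont).intervalIntegrable 0 1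
  have hIq : IntervalIntegrable (fun θ => q (u θ)) volume 0 1 :=
    (hqc.comp hu_cont).intervalIntegrable 0 1
  set I1 := ∫ θ in (0:ℝ)..1, u θ with hI1
  set If := ∫ θ in (0:ℝ)..1, f (u θ) with hIf'
  set Iη := ∫ θ in (0:ℝ)..1, η (u θ) with hIη'
  set Iq := ∫ θ in (0:ℝ)..1, q (u θ) with hIq'
  have hβval : (∫ θ in (0:ℝ)..1, (u θ - um) / (up - um)) = (I1 - um) / (up - um) := by
    rw [intervalIntegral.integral_div,
      intervalIntegral.integral_sub hIu intervalIntegrable_const,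
      intervalIntegral.integral_const]
    norm_num
    rfl
  -- the argument of η on the LHS equals the integral of the local intermediate states
  have harg : (1 - 1 / 2 * ∫ θ in (0:ℝ)..1, (u θ - um) / (up - um)) * um
        + (1 / 2 * ∫ θ in (0:ℝ)..1, (u θ - um) / (up - um)) * up
        - (If - f um) / (2 * α)
      = ∫ θ in (0:ℝ)..1, ((u θ + um) / 2 - (f (u θ) - f um) / (2 * α)) := by
    have h1 : IntervalIntegrable (fun θ => (u θ + um) / 2) volume 0 1 :=
      ((hu_cont.add continuous_const).div_const 2).intervalIntegrable 0 1
    have h2 : IntervalIntegrable (fun θ => (f (u θ) - f um) / (2 * α)) volume 0 1 :=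
      (((hfc.comp hu_cont).sub continuous_const).div_const (2 * α)).intervalIntegrable 0 1
    have hR : (∫ θ in (0:ℝ)..1, ((u θ + um) / 2 - (f (u θ) - f um) / (2 * α)))
        = (I1 + um) / 2 - (If - f um) / (2 * α) := by
      rw [intervalIntegral.integral_sub h1 h2, intervalIntegral.integral_div,
        intervalIntegral.integral_div,
        intervalIntegral.integral_add hIu intervalIntegrable_const,
        intervalIntegral.integral_sub hIf intervalIntegrable_const,
        intervalIntegral.integral_const, intervalIntegral.integral_const]
      simp only [sub_zero, one_smul, smul_eq_mul]
      ring
    rw [hR, hβval]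
    field_simp
    ring
  have hrhs : (∫ θ in (0:ℝ)..1, ((η (u θ) + η um) / 2 - (q (u θ) - q um) / (2 * α)))
      = (η um + Iη) / 2 - (Iq - q um) / (2 * α) := by
    have h1 : IntervalIntegrable (fun θ => (η (u θ) + η um) / 2) volume 0 1 :=
      (((hηc.comp hu_cont).add continuous_const).div_const 2).intervalIntegrable 0 1
    have h2 : IntervalIntegrable (fun θ => (q (u θ) - q um) / (2 * α)) volume 0 1 :=
      (((hqc.comp hu_cont).sub continuous_const).div_const (2 * α)).intervalIntegrable 0 1
    rw [intervalIntegral.integral_sub h1 h2, intervalIntegral.integral_div,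
      intervalIntegral.integral_div,
      intervalIntegral.integral_add hIη intervalIntegrable_const,
      intervalIntegral.integral_sub hIq intervalIntegrable_const,
      intervalIntegral.integral_const, intervalIntegral.integral_const]
    simp only [sub_zero, one_smul, smul_eq_mul]
    ring
  rw [harg, ← hrhs]
  -- Jensen's inequality
  have hjensen := jensen_unit η (fun θ => (u θ + um) / 2 - (f (u θ) - f um) / (2 * α))
    hηc hηcvx (((hu_cont.add continuous_const).div_const 2).sub
      (((hfc.comp hu_cont).sub continuous_const).div_const (2 * α)))
  refine hjensen.trans ?_
  apply intervalIntegral.integral_mono_on zero_le_one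
  · exact ((hηc.comp (((hu_cont.add continuous_const).div_const 2).sub
      (((hfc.comp hu_cont).sub continuous_const).div_const (2 * α)))).intervalIntegrable 0 1)
  · exact ((((hηc.comp hu_cont).add continuous_const).div_const 2).sub
      (((hqc.comp hu_cont).sub continuous_const).div_const (2 * α))).intervalIntegrable 0 1
  · intro θ hθ
    exact hll (u θ) (hu_mem θ hθ)

/-- Entropy inequality for the intermediate state built on the EC flux. -/
theorem stmt5 (f ϑ uinv η : ℝ → ℝ) (m M Lf α : ℝ)
    (hf : ContDiff ℝ 1 f) (hf' : ∀ w ∈ Set.Icc m M, |deriv f w| ≤ Lf)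
    (hϑ : ContDiff ℝ 2 ϑ) (hconv : ∀ x, 0 < deriv (deriv ϑ) x)
    (hinvL : Function.LeftInverse uinv (deriv ϑ))
    (hinvR : Function.RightInverse uinv (deriv ϑ))
    (hcont : Continuous uinv)
    (hη : ContDiff ℝ 1 η) (hηcvx : ConvexOn ℝ Set.univ η)
    (q : ℝ → ℝ) (hq : ∀ u, q u = ∫ w in m..u, deriv η w * deriv f w)
    (hec : ℝ → ℝ → ℝ)
    (hhec : ∀ a b, hec a b = ∫ θ in (0:ℝ)..1,
        f (uinv (θ * deriv ϑ b + (1 - θ) * deriv ϑ a)))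
    (β : ℝ → ℝ → ℝ)
    (hβdiag : ∀ a, β a a = 1 / 4)
    (hβ : ∀ a b, a ≠ b → β a b = (1 / 2) * ∫ θ in (0:ℝ)..1,
        (uinv (θ * deriv ϑ b + (1 - θ) * deriv ϑ a) - a) / (b - a))
    (qec ηbar : ℝ → ℝ → ℝ)
    (hqec : ∀ a b, qec a b = ∫ θ in (0:ℝ)..1,
        q (uinv (θ * deriv ϑ b + (1 - θ) * deriv ϑ a)))
    (hηbar : ∀ a b, ηbar a b = ∫ θ in (0:ℝ)..1,
        η (uinv (θ * deriv ϑ b + (1 - θ) * deriv ϑ a)))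
    (um up : ℝ) (hum : um ∈ Set.Icc m M) (hup : up ∈ Set.Icc m M)
    (hLf : 0 < Lf) (hα : Lf ≤ α) :
    η ((1 - β um up) * um + β um up * up - (hec um up - f um) / (2 * α)) ≤
      (η um + ηbar um up) / 2 - (qec um up - q um) / (2 * α) := by
  have hα0 : 0 < α := hLf.trans_le hα
  by_cases hne : um = up
  · -- diagonal case: everything collapses to `η um ≤ η um`
    subst hne
    have hc : ∀ θ : ℝ, θ * deriv ϑ um + (1 - θ) * deriv ϑ um = deriv ϑ um :=
      fun θ => by ring
    have h1 : hec um um = f um := by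
      rw [hhec]
      simp only [hc, hinvL um, intervalIntegral.integral_const,
        smul_eq_mul, sub_zero, one_mul]
    have h2 : qec um um = q um := by
      rw [hqec]
      simp only [hc, hinvL um, intervalIntegral.integral_const,
        smul_eq_mul, sub_zero, one_mul]
    have h3 : ηbar um um = η um := by
      rw [hηbar]
      simp only [hc, hinvL um, intervalIntegral.integral_const,
        smul_eq_mul, sub_zero, one_mul]
    rw [h1, h2, h3, hβdiag]
    have e1 : (1 - 1 / 4) * um + 1 / 4 * um - (f um - f um) / (2 * α) = um := by ring
    have e2 : (η um + η um) / 2 - (q um - q um) / (2 * α) = η um := by ring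
    rw [e1, e2]
  · -- off-diagonal case
    have hvmono : StrictMono (deriv ϑ) := strictMono_of_deriv_pos hconv
    have huinv_mono : Monotone uinv := by
      intro x y hxy
      by_contra h
      push_neg at h
      have := hvmono h
      rw [hinvR x, hinvR y] at this
      exact absurd hxy (not_le.2 this)
    have hu_cont : Continuous (fun θ : ℝ =>
        uinv (θ * deriv ϑ up + (1 - θ) * deriv ϑ um)) := by
      apply hcont.comp
      fun_prop
    have hu_mem : ∀ θ ∈ Set.Icc (0:ℝ) 1,
        uinv (θ * deriv ϑ up + (1 - θ) * deriv ϑ um) ∈ Set.Icc m M := by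
      intro θ hθ
      rcases le_total um up with h | h
      · have hv : deriv ϑ um ≤ deriv ϑ up := hvmono.monotone h
        have h1 : deriv ϑ um ≤ θ * deriv ϑ up + (1 - θ) * deriv ϑ um := by
          nlinarith [hθ.1, hθ.2]
        have h2 : θ * deriv ϑ up + (1 - θ) * deriv ϑ um ≤ deriv ϑ up := by
          nlinarith [hθ.1, hθ.2]
        have l1 := huinv_mono h1
        have l2 := huinv_mono h2
        rw [hinvL um] at l1
        rw [hinvL up] at l2
        exact ⟨hum.1.trans l1, l2.trans hup.2⟩
      · have hv : deriv ϑ up ≤ deriv ϑ um := hvmono.monotone h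
        have h1 : deriv ϑ up ≤ θ * deriv ϑ up + (1 - θ) * deriv ϑ um := by
          nlinarith [hθ.1, hθ.2]
        have h2 : θ * deriv ϑ up + (1 - θ) * deriv ϑ um ≤ deriv ϑ um := by
          nlinarith [hθ.1, hθ.2]
        have l1 := huinv_mono h1
        have l2 := huinv_mono h2
        rw [hinvL up] at l1
        rw [hinvL um] at l2
        exact ⟨hup.1.trans l1, l2.trans hum.2⟩
    have hqc : Continuous q := by
      have hq' : q = fun u => ∫ w in m..u, deriv η w * deriv f w := funext hq
      have : Differentiable ℝ (fun u => ∫ w in m..u, deriv η w * deriv f w) := fun x =>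
        (((hη.continuous_deriv le_rfl).mul
          (hf.continuous_deriv le_rfl)).integral_hasStrictDerivAt m x).hasDerivAt.differentiableAt
      rw [hq']
      exact this.continuous
    have hll := hll_aux f η q m M Lf α um hf hf' hη hηcvx hq hum hLf hα
    rw [hβ um up hne, hhec, hqec, hηbar]
    exact main_ne f η q m M α um up
      (fun θ : ℝ => uinv (θ * deriv ϑ up + (1 - θ) * deriv ϑ um))
      hu_cont hu_mem (hf.continuous) (hη.continuous) hqc hll hηcvx hα0 hne
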